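/- Let V be a finite-dimensional real normed vector space, g a nondegenerate symmetric bilinear form on V, κ ≠ 0 a real number, and T > 0. Let Y : [0,T] → End(V) be continuously differentiable with Y(t) g-antisymmetric for every t; let c : [0,T] → V be differentiable with c'(t) = Y(t)(c(t)) for all t and g(c(0), c(0)) = 2κ (hence g(c(t), c(t)) = 2κ for all t); let R : [0,T] → End(V) with R(t)(c(t)) = 0 for all t; and let P : [0,T] → Hom(V, End(V)) with P(t)(c(t)) = Y'(t) for all t. Call a twice differentiable J : [0,T] → V an energy-constrained Jacobi field if J''(t) + R(t)(J(t)) − P(t)(J(t))(c(t)) − Y(t)(J'(t)) − (1/(2κ))·g(J'(0), c(0))·Y(t)(c(t)) = 0 for all t ∈ [0,T]. Then a twice differentiable J : [0,T] → V satisfies: J is an energy-constrained Jacobi field with J(t) ∈ span{c(t)} for every t, if and only if there exist a, b ∈ ℝ with J(t) = (a + b·t)·c(t) for all t ∈ [0,T]. -/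
import Mathlib


variable {V : Type*} [NormedAddCommGroup V] [NormedSpace ℝ V]

/-- `J : [0,T] → V` is an energy-constrained Jacobi field (in a parallel frame along an
electromagnetic geodesic of energy `κ`) if it is twice differentiable on `[0,T]` and
satisfies
`J'' + R t (J t) − P t (J t) (c t) − Y t (J' t) − (1/(2κ))·g(J'(0), c(0)) • Y t (c t) = 0`. -/
def IsECJacobiField (T κ : ℝ) (g : LinearMap.BilinForm ℝ V)
    (Y R : ℝ → (V →L[ℝ] V)) (P : ℝ → (V →ₗ[ℝ] (V →L[ℝ] V)))
    (c : ℝ → V) (J : ℝ → V) : Prop :=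
  ∃ J' J'' : ℝ → V,
    (∀ t ∈ Set.Icc (0:ℝ) T, HasDerivWithinAt J (J' t) (Set.Icc 0 T) t) ∧
    (∀ t ∈ Set.Icc (0:ℝ) T, HasDerivWithinAt J' (J'' t) (Set.Icc 0 T) t) ∧
    (∀ t ∈ Set.Icc (0:ℝ) T,
      J'' t + R t (J t) - P t (J t) (c t) - Y t (J' t)
        - ((1 / (2 * κ)) * g (J' 0) (c 0)) • Y t (c t) = 0)

/-- Derivative of `t ↦ g (u t) (v t)` for a bilinear form on a finite-dimensional space. -/
theorem bilin_hasDerivWithinAt [FiniteDimensional ℝ V] (g : LinearMap.BilinForm ℝ V)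
    {s : Set ℝ} {u v u' v' : ℝ → V}
    (hu : ∀ t ∈ s, HasDerivWithinAt u (u' t) s t)
    (hv : ∀ t ∈ s, HasDerivWithinAt v (v' t) s t) :
    ∀ t ∈ s, HasDerivWithinAt (fun t => g (u t) (v t))
      (g (u' t) (v t) + g (u t) (v' t)) s t := by
  let G : V →L[ℝ] V →L[ℝ] ℝ :=
    LinearMap.toContinuousLinearMap
      ((LinearMap.toContinuousLinearMap :
          (V →ₗ[ℝ] ℝ) ≃ₗ[ℝ] (V →L[ℝ] ℝ)).toLinearMap.comp g)
  have hG : ∀ u v, G u v = g u v := fun u v => by simp [G]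
  intro t ht
  have h1 : HasDerivWithinAt (fun t => G (u t)) (G (u' t)) s t :=
    G.hasFDerivAt.comp_hasDerivWithinAt t (hu t ht)
  have h2 := h1.clm_apply (hv t ht)
  simpa [hG] using h2

/-- A real function with vanishing derivative on a convex set is constant there. -/
theorem const_of_hasDerivWithinAt_zero {s : Set ℝ} (hs : Convex ℝ s) {φ φ' : ℝ → ℝ}
    (h : ∀ t ∈ s, HasDerivWithinAt φ (φ' t) s t) (h0 : ∀ t ∈ s, φ' t = 0)
    {x y : ℝ} (hx : x ∈ s) (hy : y ∈ s) : φ y = φ x := by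
  have hb := Convex.norm_image_sub_le_of_norm_hasDerivWithin_le (C := 0) h
    (fun t ht => by simp [h0 t ht]) hs hx hy
  have : ‖φ y - φ x‖ ≤ 0 := by simpa using hb
  have := norm_le_zero_iff.mp this
  exact sub_eq_zero.mp this

/-- **Example `examplejacobi` (in a parallel frame).** The energy-constrained Jacobi
fields everywhere tangent to the geodesic (i.e. with `J t ∈ span {c t}` for all `t`)
are exactly the fields `J t = (a + b·t) • c t` with `a, b ∈ ℝ`. -/
theorem ecJacobiField_tangent_iff
    [FiniteDimensional ℝ V]
    (g : LinearMap.BilinForm ℝ V) (hgsymm : ∀ u v : V, g u v = g v u)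
    (hgnd : ∀ u : V, (∀ v : V, g u v = 0) → u = 0)
    (κ : ℝ) (hκ : κ ≠ 0) (T : ℝ) (hT : 0 < T)
    (Y Y' : ℝ → (V →L[ℝ] V))
    (hY : ∀ t ∈ Set.Icc (0:ℝ) T, HasDerivWithinAt Y (Y' t) (Set.Icc 0 T) t)
    (hY'cont : ContinuousOn Y' (Set.Icc 0 T))
    (hYanti : ∀ t ∈ Set.Icc (0:ℝ) T, ∀ u v : V, g (Y t u) v = - g u (Y t v))
    (c : ℝ → V)
    (hc : ∀ t ∈ Set.Icc (0:ℝ) T, HasDerivWithinAt c (Y t (c t)) (Set.Icc 0 T) t)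
    (hc0 : g (c 0) (c 0) = 2 * κ)
    (R : ℝ → (V →L[ℝ] V)) (hR : ∀ t ∈ Set.Icc (0:ℝ) T, R t (c t) = 0)
    (P : ℝ → (V →ₗ[ℝ] (V →L[ℝ] V)))
    (hP : ∀ t ∈ Set.Icc (0:ℝ) T, P t (c t) = Y' t)
    (J : ℝ → V) :
    (IsECJacobiField T κ g Y R P c J ∧
        ∀ t ∈ Set.Icc (0:ℝ) T, J t ∈ Submodule.span ℝ {c t})
      ↔ ∃ a b : ℝ, ∀ t ∈ Set.Icc (0:ℝ) T, J t = (a + b * t) • c t := by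
  set s : Set ℝ := Set.Icc (0:ℝ) T with hs_def
  have hs : Convex ℝ s := convex_Icc 0 T
  have hus : UniqueDiffOn ℝ s := uniqueDiffOn_Icc hT
  have h0s : (0:ℝ) ∈ s := ⟨le_refl 0, hT.le⟩
  have h2κ : (2:ℝ) * κ ≠ 0 := mul_ne_zero two_ne_zero hκ
  -- g(Y t u, u) = 0 for all u
  have hYuu : ∀ t ∈ s, ∀ u : V, g (Y t u) u = 0 := by
    intro t ht u
    have h1 := hYanti t ht u u
    have h2 := hgsymm u (Y t u)
    linarith
  have hYcc : ∀ t ∈ s, g (Y t (c t)) (c t) = 0 := fun t ht => hYuu t ht (c t)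
  have hcYc : ∀ t ∈ s, g (c t) (Y t (c t)) = 0 := fun t ht =>
    (hgsymm (c t) (Y t (c t))).trans (hYcc t ht)
  -- energy is constant
  have hcc : ∀ t ∈ s, g (c t) (c t) = 2 * κ := by
    intro t ht
    have hd := bilin_hasDerivWithinAt g hc hc
    have hz : ∀ t ∈ s, g (Y t (c t)) (c t) + g (c t) (Y t (c t)) = 0 := by
      intro t ht; rw [hYcc t ht, hcYc t ht]; ring
    have := const_of_hasDerivWithinAt_zero hs hd hz h0s ht
    rw [this, hc0]
  -- derivative of t ↦ Y t (c t)
  have hYc' : ∀ t ∈ s, HasDerivWithinAt (fun t => Y t (c t))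
      (Y' t (c t) + Y t (Y t (c t))) s t :=
    fun t ht => (hY t ht).clm_apply (hc t ht)
  -- g(Y' t (c t), c t) = 0
  have hY'cc : ∀ t ∈ s, g (Y' t (c t)) (c t) = 0 := by
    intro t ht
    have hχ := bilin_hasDerivWithinAt g hYc' hc t ht
    have hχ0 : HasDerivWithinAt (fun t => g (Y t (c t)) (c t)) 0 s t :=
      (hasDerivWithinAt_const t s 0).congr (fun y hy => hYcc y hy) (hYcc t ht)
    have h1 := hχ.derivWithin (hus t ht)
    have h2 := hχ0.derivWithin (hus t ht)
    have h3 : g (Y' t (c t) + Y t (Y t (c t))) (c t)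
        + g (Y t (c t)) (Y t (c t)) = 0 := by rw [← h1, h2]
    have h4 := hYanti t ht (Y t (c t)) (c t)
    simp only [map_add, LinearMap.add_apply] at h3
    linarith [hgsymm (Y t (c t)) (Y t (Y t (c t)))]
  constructor
  · -- forward direction
    rintro ⟨⟨J', J'', hJd, hJ'd, heq⟩, hspan⟩
    set f : ℝ → ℝ := fun t => g (J t) (c t) / (2 * κ) with hf_def
    have hf : ∀ t ∈ s, J t = f t • c t := by
      intro t ht
      obtain ⟨r, hr⟩ := Submodule.mem_span_singleton.mp (hspan t ht)
      have hft : f t = r := by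
        simp only [hf_def, ← hr, map_smul, LinearMap.smul_apply, smul_eq_mul, hcc t ht]
        field_simp
      rw [hft]; exact hr.symm
    set fd1 : ℝ → ℝ := fun t => (g (J' t) (c t) + g (J t) (Y t (c t))) / (2 * κ)
      with hfd1_def
    have hfd : ∀ t ∈ s, HasDerivWithinAt f (fd1 t) s t :=
      fun t ht => (bilin_hasDerivWithinAt g hJd hc t ht).div_const _
    have hJYc : ∀ t ∈ s, g (J t) (Y t (c t)) = 0 := by
      intro t ht
      rw [hf t ht, map_smul, LinearMap.smul_apply, smul_eq_mul, hcYc t ht, mul_zero]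
    have hfd1eq : ∀ t ∈ s, fd1 t = g (J' t) (c t) / (2 * κ) := by
      intro t ht
      simp only [hfd1_def, hJYc t ht, add_zero]
    -- identify J'
    have hJ'eq : ∀ t ∈ s, J' t = f t • Y t (c t) + fd1 t • c t := by
      intro t ht
      have h1 : HasDerivWithinAt (fun y => f y • c y)
          (f t • Y t (c t) + fd1 t • c t) s t := (hfd t ht).smul (hc t ht)
      have h2 : HasDerivWithinAt J (f t • Y t (c t) + fd1 t • c t) s t :=
        h1.congr (fun y hy => hf y hy) (hf t ht)
      rw [← (hJd t ht).derivWithin (hus t ht), h2.derivWithin (hus t ht)]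
    -- second derivative of f
    set fd2 : ℝ → ℝ := fun t => (g (J'' t) (c t) + g (J' t) (Y t (c t))) / (2 * κ)
      with hfd2_def
    have hψd : ∀ t ∈ s, HasDerivWithinAt (fun t => g (J' t) (c t) / (2 * κ)) (fd2 t) s t :=
      fun t ht => (bilin_hasDerivWithinAt g hJ'd hc t ht).div_const _
    have hfd1d : ∀ t ∈ s, HasDerivWithinAt fd1 (fd2 t) s t :=
      fun t ht => (hψd t ht).congr (fun y hy => hfd1eq y hy) (hfd1eq t ht)
    -- fd2 = 0 on s
    have hfd20 : ∀ t ∈ s, fd2 t = 0 := by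
      intro t ht
      have hR0 : R t (J t) = 0 := by
        rw [hf t ht, map_smul, hR t ht, smul_zero]
      have hPj : P t (J t) (c t) = f t • Y' t (c t) := by
        rw [hf t ht, map_smul, hP t ht, ContinuousLinearMap.smul_apply]
      have h := congrArg (fun v => g v (c t)) (heq t ht)
      simp only [map_add, map_sub, map_smul, LinearMap.add_apply, LinearMap.sub_apply,
        LinearMap.smul_apply, smul_eq_mul, map_zero, LinearMap.zero_apply, hR0, hPj] at h
      rw [hYcc t ht] at h
      have hYJ' : g (Y t (J' t)) (c t) = - g (J' t) (Y t (c t)) := hYanti t ht _ _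
      rw [hY'cc t ht, hYJ'] at h
      have hnum : g (J'' t) (c t) + g (J' t) (Y t (c t)) = 0 := by linarith
      rw [hfd2_def]
      simp only [hnum, zero_div]
    -- fd1 is constant
    have hfd1const : ∀ t ∈ s, fd1 t = fd1 0 :=
      fun t ht => const_of_hasDerivWithinAt_zero hs hfd1d hfd20 h0s ht
    set b : ℝ := fd1 0 with hb_def
    set a : ℝ := f 0 with ha_def
    have hlin : ∀ t ∈ s, f t = a + b * t := by
      intro t ht
      have hθd : ∀ t ∈ s, HasDerivWithinAt (fun y => f y - b * y) (fd1 t - b) s t := by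
        intro t ht
        have hid : HasDerivWithinAt (fun y : ℝ => b * y) b s t := by
          simpa using (hasDerivWithinAt_id t s).const_mul b
        exact (hfd t ht).sub hid
      have hθ0 : ∀ t ∈ s, fd1 t - b = 0 := by
        intro t ht; rw [hfd1const t ht]; ring
      have := const_of_hasDerivWithinAt_zero hs hθd hθ0 h0s ht
      simp only [mul_zero, sub_zero] at this
      rw [ha_def]; linarith
    exact ⟨a, b, fun t ht => by rw [hf t ht, hlin t ht]⟩
  · -- backward direction
    rintro ⟨a, b, hab⟩
    set J'w : ℝ → V := fun t => (a + b * t) • Y t (c t) + b • c t with hJ'w_def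
    set J''w : ℝ → V := fun t =>
      ((a + b * t) • (Y' t (c t) + Y t (Y t (c t))) + b • Y t (c t)) + b • Y t (c t)
      with hJ''w_def
    have hl : ∀ t ∈ s, HasDerivWithinAt (fun y : ℝ => a + b * y) b s t := by
      intro t ht
      simpa using ((hasDerivWithinAt_id t s).const_mul b).const_add a
    have hJd : ∀ t ∈ s, HasDerivWithinAt J (J'w t) s t := by
      intro t ht
      have h1 : HasDerivWithinAt (fun y => (a + b * y) • c y)
          ((a + b * t) • Y t (c t) + b • c t) s t := (hl t ht).smul (hc t ht)
      exact h1.congr (fun y hy => hab y hy) (hab t ht)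
    have hJ'd : ∀ t ∈ s, HasDerivWithinAt J'w (J''w t) s t := by
      intro t ht
      have h1 : HasDerivWithinAt (fun y => (a + b * y) • (Y y (c y)))
          ((a + b * t) • (Y' t (c t) + Y t (Y t (c t))) + b • Y t (c t)) s t :=
        (hl t ht).smul (hYc' t ht)
      have h2 : HasDerivWithinAt (fun y => b • c y) (b • Y t (c t)) s t :=
        (hc t ht).const_smul b
      exact h1.add h2
    refine ⟨⟨J'w, J''w, hJd, hJ'd, ?_⟩, ?_⟩
    · intro t ht
      have hcoef : (1 / (2 * κ)) * g (J'w 0) (c 0) = b := by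
        have : g (J'w 0) (c 0) = b * (2 * κ) := by
          simp only [hJ'w_def, map_add, map_smul, LinearMap.add_apply, LinearMap.smul_apply,
            smul_eq_mul, hc0, hYcc 0 h0s]
          ring
        rw [this]; field_simp
      rw [hcoef, hab t ht, map_smul, hR t ht, smul_zero, map_smul, hP t ht]
      simp only [hJ''w_def, hJ'w_def, ContinuousLinearMap.smul_apply, map_add, map_smul,
        smul_add]
      module
    · intro t ht
      rw [hab t ht]
      exact Submodule.smul_mem _ _ (Submodule.mem_span_singleton_self _)
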